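/- Let p, q > 0 with p ≠ q, and let a, b ∈ ℝ with constants such that C = p/(p - q). Then for all z ≥ 0: ∫₀^∞ g(x) (1/p) e^{-x/p} dx = 1 - C e^{-Az} - (1 - C) e^{-Bz}, where g(x) = 1 for x < Δ_s z; g(x) = 1 - exp(-(Δz - x)/q) for Δ_s z < x < (Δ - Δ_d) z; and g(x) = 1 - exp(-Δ_d z/q) for x > (Δ - Δ_d) z; here A = (Δ - Δ_d)/p + Δ_d/q, B = Δ_s/p + (Δ - Δ_s)/q, and Δ, Δ_s, Δ_d > 0 satisfy Δ - Δ_s - Δ_d = Δ_s Δ_d (so Δ > Δ_s and Δ > Δ_d). -/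

import Mathlib

open MeasureTheory Real Set
set_option maxHeartbeats 1000000

lemma expDeriv {r : ℝ} (hr : 0 < r) (x : ℝ) :
    HasDerivAt (fun y => -Real.exp (-y / r)) ((1 / r) * Real.exp (-x / r)) x := by
  have h1 : HasDerivAt (fun y : ℝ => -y / r) (-1 / r) x := by
    simpa using ((hasDerivAt_id x).neg.div_const r)
  have := (h1.exp).neg
  refine this.congr_deriv ?_
  ring

lemma expInt_ivl {r : ℝ} (hr : 0 < r) (a b : ℝ) :
    ∫ x in a..b, (1 / r) * Real.exp (-x / r) = Real.exp (-a / r) - Real.exp (-b / r) := by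
  have hc : IntervalIntegrable (fun x => (1 / r) * Real.exp (-x / r)) volume a b :=
    (Continuous.intervalIntegrable (by continuity) a b)
  rw [intervalIntegral.integral_eq_sub_of_hasDerivAt (fun x _ => expDeriv hr x) hc]; ring

lemma expInt_exp {c : ℝ} (hc : c ≠ 0) (a b : ℝ) :
    ∫ x in a..b, Real.exp (c * x) = (Real.exp (c * b) - Real.exp (c * a)) / c := by
  have h : ∀ x ∈ Set.uIcc a b, HasDerivAt (fun y => Real.exp (c * y) / c)
      (Real.exp (c * x)) x := by
    intro x _
    have h1 : HasDerivAt (fun y : ℝ => c * y) c x := by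
      simpa using (hasDerivAt_id x).const_mul c
    have := (h1.exp).div_const c
    refine this.congr_deriv ?_
    field_simp
  have hci : IntervalIntegrable (fun x => Real.exp (c * x)) volume a b :=
    (Continuous.intervalIntegrable (by continuity) a b)
  rw [intervalIntegral.integral_eq_sub_of_hasDerivAt h hci]; ring

lemma expInt_tailInt {r : ℝ} (hr : 0 < r) (a : ℝ) :
    IntegrableOn (fun x => (1 / r) * Real.exp (-x / r)) (Set.Ioi a) := by
  have h0 : IntegrableOn (fun x => Real.exp (-(1/r) * x)) (Set.Ioi a) :=
    exp_neg_integrableOn_Ioi a (by positivity)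
  have h1 := h0.const_mul (1 / r)
  refine (integrableOn_congr_fun (fun x _ => ?_) measurableSet_Ioi).mpr h1
  rw [show -x / r = -(1/r) * x by ring]

lemma expInt_tail {r : ℝ} (hr : 0 < r) (a : ℝ) :
    ∫ x in Set.Ioi a, (1 / r) * Real.exp (-x / r) = Real.exp (-a / r) := by
  have hlim : Filter.Tendsto (fun y => -Real.exp (-y / r)) Filter.atTop (nhds 0) := by
    rw [show (0:ℝ) = -0 by ring]
    apply Filter.Tendsto.neg
    apply Real.tendsto_exp_atBot.comp
    have h1 : Filter.Tendsto (fun y : ℝ => y / r) Filter.atTop Filter.atTop :=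
      Filter.tendsto_id.atTop_div_const hr
    have h2 : Filter.Tendsto (fun y : ℝ => -(y / r)) Filter.atTop Filter.atBot :=
      Filter.tendsto_neg_atTop_atBot.comp h1
    simpa [neg_div] using h2
  have := integral_Ioi_of_hasDerivAt_of_tendsto' (fun x _ => expDeriv hr x)
    (expInt_tailInt hr a) hlim
  rw [this]; ring

theorem stmt_18 (p q Δ Δs Δd A B C : ℝ)
    (hp : 0 < p) (hq : 0 < q) (hpq : p ≠ q)
    (hΔ : 0 < Δ) (hΔs : 0 < Δs) (hΔd : 0 < Δd) (hrel : Δ - Δs - Δd = Δs * Δd)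
    (hA : A = (Δ - Δd) / p + Δd / q) (hB : B = Δs / p + (Δ - Δs) / q)
    (hC : C = p / (p - q)) :
    ∀ z : ℝ, 0 ≤ z →
      (∫ x in Set.Ioi (0:ℝ),
          (if x < Δs * z then (1:ℝ)
           else if x < (Δ - Δd) * z then 1 - Real.exp (-(Δ * z - x) / q)
           else 1 - Real.exp (-(Δd * z) / q)) *
            ((1 / p) * Real.exp (-x / p)))
        = 1 - C * Real.exp (-A * z) - (1 - C) * Real.exp (-B * z) := by
  intro z hz
  have hp' : p ≠ 0 := ne_of_gt hp
  have hq' : q ≠ 0 := ne_of_gt hq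
  have hpq' : p - q ≠ 0 := sub_ne_zero.mpr hpq
  set s := Δs * z with hsdef
  set t := (Δ - Δd) * z with htdef
  have hst : s ≤ t := by
    apply mul_le_mul_of_nonneg_right _ hz; nlinarith
  have hs0 : 0 ≤ s := by positivity
  have ht0 : 0 ≤ t := le_trans hs0 hst
  have htΔ : t ≤ Δ * z := by
    apply mul_le_mul_of_nonneg_right _ hz; nlinarith
  set f := fun x : ℝ =>
      (if x < s then (1:ℝ)
       else if x < t then 1 - Real.exp (-(Δ * z - x) / q)
       else 1 - Real.exp (-(Δd * z) / q)) * ((1 / p) * Real.exp (-x / p)) with hfdef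
  -- measurability
  have hmeasf : Measurable f := by
    apply Measurable.mul _ (by fun_prop)
    apply Measurable.ite (measurableSet_lt measurable_id measurable_const) measurable_const
    apply Measurable.ite (measurableSet_lt measurable_id measurable_const) (by fun_prop)
      measurable_const
  -- bound
  have hbound : ∀ x ∈ Set.Ioi (0:ℝ), ‖f x‖ ≤ (1 / p) * Real.exp (-x / p) := by
    intro x _
    have hd : (0:ℝ) ≤ (1 / p) * Real.exp (-x / p) := by positivity
    rw [hfdef, Real.norm_eq_abs, abs_mul, abs_of_nonneg hd]
    have h1 : |if x < s then (1:ℝ)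
        else if x < t then 1 - Real.exp (-(Δ * z - x) / q)
        else 1 - Real.exp (-(Δd * z) / q)| ≤ 1 := by
      split_ifs with h1 h2
      · simp
      · have hx : x < Δ * z := lt_of_lt_of_le h2 htΔ
        have he : Real.exp (-(Δ * z - x) / q) ≤ 1 := by
          rw [Real.exp_le_one_iff]
          apply div_nonpos_of_nonpos_of_nonneg (by linarith) hq.le
        have := Real.exp_pos (-(Δ * z - x) / q)
        rw [abs_le]; constructor <;> linarith
      · have he : Real.exp (-(Δd * z) / q) ≤ 1 := by
          rw [Real.exp_le_one_iff]
          apply div_nonpos_of_nonpos_of_nonneg (by nlinarith) hq.le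
        have := Real.exp_pos (-(Δd * z) / q)
        rw [abs_le]; constructor <;> linarith
    calc |if x < s then (1:ℝ)
        else if x < t then 1 - Real.exp (-(Δ * z - x) / q)
        else 1 - Real.exp (-(Δd * z) / q)| * ((1/p) * Real.exp (-x/p))
        ≤ 1 * ((1/p) * Real.exp (-x/p)) := by
          apply mul_le_mul_of_nonneg_right h1 hd
      _ = (1/p) * Real.exp (-x/p) := one_mul _
  have hintf : IntegrableOn f (Set.Ioi 0) := by
    apply Integrable.mono' (expInt_tailInt hp 0) hmeasf.aestronglyMeasurable
    exact (ae_restrict_iff' measurableSet_Ioi).mpr (Filter.Eventually.of_forall hbound)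
  -- split the integral
  rw [← Set.Ioc_union_Ioi_eq_Ioi ht0,
      setIntegral_union (Set.Ioc_disjoint_Ioi le_rfl) measurableSet_Ioi
        (hintf.mono_set Set.Ioc_subset_Ioi_self) (hintf.mono_set (Set.Ioi_subset_Ioi ht0)),
      ← Set.Ioc_union_Ioc_eq_Ioc hs0 hst,
      setIntegral_union (Set.Ioc_disjoint_Ioc_of_le le_rfl) measurableSet_Ioc
        (hintf.mono_set Set.Ioc_subset_Ioi_self)
        (hintf.mono_set (fun x hx => lt_of_le_of_lt hs0 hx.1))]
  -- piece 1
  have hI1 : ∫ x in Set.Ioc 0 s, f x = 1 - Real.exp (-s / p) := by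
    rw [integral_Ioc_eq_integral_Ioo,
        setIntegral_congr_fun measurableSet_Ioo
          (g := fun x => (1 / p) * Real.exp (-x / p)) (fun x hx => by
            simp [hfdef, hx.2]),
        ← integral_Ioc_eq_integral_Ioo, ← intervalIntegral.integral_of_le hs0,
        expInt_ivl hp]
    simp
  -- piece 2
  have hI2 : ∫ x in Set.Ioc s t, f x
      = (Real.exp (-s / p) - Real.exp (-t / p))
        - q / (p - q) * (Real.exp (-A * z) - Real.exp (-B * z)) := by
    have hlam : (1:ℝ)/q - 1/p ≠ 0 := by
      rw [div_sub_div _ _ hq' hp']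
      exact div_ne_zero (by intro h; apply hpq; linarith [sub_eq_zero.mp h]) (by positivity)
    have heqn : Set.EqOn f
        (fun x => (1 / p) * Real.exp (-x / p)
          - ((1 / p) * Real.exp (-(Δ * z) / q)) * Real.exp ((1/q - 1/p) * x))
        (Set.Ioo s t) := by
      intro x hx
      have h1 : ¬ x < s := not_lt.2 hx.1.le
      simp only [hfdef, if_neg h1, if_pos hx.2]
      have he : Real.exp (-(Δ * z - x) / q) * Real.exp (-x / p)
          = Real.exp (-(Δ * z) / q) * Real.exp ((1/q - 1/p) * x) := by
        rw [← Real.exp_add, ← Real.exp_add]; congr 1; field_simp; ring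
      linear_combination (-(1/p : ℝ)) * he
    have c1 : Continuous (fun x : ℝ => (1 / p) * Real.exp (-x / p)) := by fun_prop
    have c2 : Continuous (fun x : ℝ =>
        ((1 / p) * Real.exp (-(Δ * z) / q)) * Real.exp ((1/q - 1/p) * x)) := by fun_prop
    rw [integral_Ioc_eq_integral_Ioo, setIntegral_congr_fun measurableSet_Ioo heqn,
        ← integral_Ioc_eq_integral_Ioo, ← intervalIntegral.integral_of_le hst,
        intervalIntegral.integral_sub (c1.intervalIntegrable s t) (c2.intervalIntegrable s t),
        expInt_ivl hp, intervalIntegral.integral_const_mul, expInt_exp hlam]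
    have key : (Real.exp ((1/q - 1/p) * t) - Real.exp ((1/q - 1/p) * s)) / (1/q - 1/p)
        = (p * q / (p - q)) * (Real.exp ((1/q - 1/p) * t) - Real.exp ((1/q - 1/p) * s)) := by
      rw [div_eq_iff hlam]
      field_simp
    rw [key]
    have eAt : Real.exp (-(Δ * z) / q) * Real.exp ((1/q - 1/p) * t) = Real.exp (-A * z) := by
      rw [← Real.exp_add]; congr 1; rw [hA, htdef]; field_simp; ring
    have eBs : Real.exp (-(Δ * z) / q) * Real.exp ((1/q - 1/p) * s) = Real.exp (-B * z) := by
      rw [← Real.exp_add]; congr 1; rw [hB, hsdef]; field_simp; ring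
    linear_combination (-(q/(p-q))) * eAt + (q/(p-q)) * eBs
      - (Real.exp (-(Δ * z) / q) * q * (p - q)⁻¹ *
          (Real.exp ((1/q - 1/p) * t) - Real.exp ((1/q - 1/p) * s))) * (mul_inv_cancel₀ hp')
  -- piece 3 (tail)
  have hI3 : ∫ x in Set.Ioi t, f x = Real.exp (-t / p) - Real.exp (-A * z) := by
    have heqn : Set.EqOn f
        (fun x => (1 - Real.exp (-(Δd * z) / q)) * ((1 / p) * Real.exp (-x / p)))
        (Set.Ioi t) := by
      intro x hx
      have h1 : ¬ x < s := not_lt.2 (le_of_lt (lt_of_le_of_lt hst hx))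
      have h2 : ¬ x < t := not_lt.2 hx.le
      simp [hfdef, h1, h2]
    rw [setIntegral_congr_fun measurableSet_Ioi heqn, integral_const_mul, expInt_tail hp]
    have eA : Real.exp (-(Δd * z) / q) * Real.exp (-t / p) = Real.exp (-A * z) := by
      rw [← Real.exp_add]; congr 1; rw [hA, htdef]; field_simp; ring
    linear_combination -eA
  rw [hI1, hI2, hI3, hC]
  field_simp
  ring
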